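/- Let p and l be distinct odd primes. If Γ₁ and Γ₂ are maximal abelian subgroups of Γ = ψ(Γ̃) (i.e. maximal elements of the set of abelian subgroups of Γ ordered by inclusion) and Γ₁ ≠ Γ₂, then Γ₁ ∩ Γ₂ = {1}. -/

import Mathlib

open Quaternion Matrix
open scoped Classical

noncomputable section

/-- The set `Γ̃` of integer quaternions with norm `p^r l^s` and the appropriate
parity conditions. -/
def GammaTilde (p l : ℕ) : Set ℍ[ℤ] :=
  {x | (∃ r s : ℕ, Quaternion.normSq x = (p : ℤ) ^ r * (l : ℤ) ^ s) ∧
       (Quaternion.normSq x % 4 = 1 →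
          Odd x.re ∧ Even x.imI ∧ Even x.imJ ∧ Even x.imK) ∧
       (Quaternion.normSq x % 4 = 3 →
          Even x.imI ∧ Odd x.re ∧ Odd x.imJ ∧ Odd x.imK)}

/-- The set `Ã ⊆ Γ̃` of elements of positive real part and norm `p`. -/
def Atilde (p l : ℕ) : Set ℍ[ℤ] :=
  {x | x ∈ GammaTilde p l ∧ 0 < x.re ∧ Quaternion.normSq x = (p : ℤ)}

/-- The set `B̃ ⊆ Γ̃` of elements of positive real part and norm `l`. -/
def Btilde (p l : ℕ) : Set ℍ[ℤ] :=
  {y | y ∈ GammaTilde p l ∧ 0 < y.re ∧ Quaternion.normSq y = (l : ℤ)}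

/-- The projective general linear group `PGL₂(K)`: `GL₂(K)` modulo its center. -/
abbrev PGL2 (K : Type*) [Field K] : Type _ :=
  GL (Fin 2) K ⧸ Subgroup.center (GL (Fin 2) K)

/-- The matrix `M_{c,d}(x)` associated to an integer quaternion `x`. -/
def Mcd {K : Type*} [Field K] (c d : K) (x : ℍ[ℤ]) : Matrix (Fin 2) (Fin 2) K :=
  !![(x.re : K) + (x.imI : K) * c + (x.imK : K) * d,
     -(x.imI : K) * d + (x.imJ : K) + (x.imK : K) * c;
     -(x.imI : K) * d - (x.imJ : K) + (x.imK : K) * c,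
     (x.re : K) - (x.imI : K) * c - (x.imK : K) * d]

lemma det_Mcd {K : Type*} [Field K] {c d : K} (hcd : c ^ 2 + d ^ 2 + 1 = 0)
    (x : ℍ[ℤ]) : (Mcd c d x).det = ((Quaternion.normSq x : ℤ) : K) := by
  rw [Quaternion.normSq_def']
  rw [Mcd, Matrix.det_fin_two_of]
  push_cast
  linear_combination (-(x.imI : K) ^ 2 - (x.imK : K) ^ 2) * hcd

lemma det_Mcd_ne_zero {K : Type*} [Field K] [CharZero K] {c d : K}
    (hcd : c ^ 2 + d ^ 2 + 1 = 0) {x : ℍ[ℤ]} (hx : x ≠ 0) :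
    (Mcd c d x).det ≠ 0 := by
  rw [det_Mcd hcd]
  exact_mod_cast Quaternion.normSq_ne_zero.mpr hx

/-- The image of a nonzero integer quaternion in `GL₂(K)` (junk value `1` at `x = 0`). -/
def psiGL {K : Type*} [Field K] [CharZero K] (c d : K) (hcd : c ^ 2 + d ^ 2 + 1 = 0)
    (x : ℍ[ℤ]) : GL (Fin 2) K :=
  if hx : x = 0 then 1
  else Matrix.GeneralLinearGroup.mkOfDetNeZero (Mcd c d x) (det_Mcd_ne_zero hcd hx)

variable (p l : ℕ) [Fact p.Prime] [Fact l.Prime]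

/-- The map `ψ : ℍ(ℤ) → PGL₂(ℚ_p) × PGL₂(ℚ_l)` (with junk value at `0`). -/
def psi (cp dp : ℚ_[p]) (cl dl : ℚ_[l])
    (hp : cp ^ 2 + dp ^ 2 + 1 = 0) (hl : cl ^ 2 + dl ^ 2 + 1 = 0)
    (x : ℍ[ℤ]) : PGL2 ℚ_[p] × PGL2 ℚ_[l] :=
  (QuotientGroup.mk (psiGL cp dp hp x), QuotientGroup.mk (psiGL cl dl hl x))

/-- The group `Γ = ψ(Γ̃)`, as the subgroup of `PGL₂(ℚ_p) × PGL₂(ℚ_l)` generated by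
the image `ψ(Γ̃)` (this image is itself closed under multiplication and inverses,
so it coincides with the generated subgroup). -/
def Gamma (cp dp : ℚ_[p]) (cl dl : ℚ_[l])
    (hp : cp ^ 2 + dp ^ 2 + 1 = 0) (hl : cl ^ 2 + dl ^ 2 + 1 = 0) :
    Subgroup (PGL2 ℚ_[p] × PGL2 ℚ_[l]) :=
  Subgroup.closure (psi p l cp dp cl dl hp hl '' GammaTilde p l)

/-- The subgroup `Γ_p = ⟨ψ(Ã)⟩`. -/
def GammaP (cp dp : ℚ_[p]) (cl dl : ℚ_[l])
    (hp : cp ^ 2 + dp ^ 2 + 1 = 0) (hl : cl ^ 2 + dl ^ 2 + 1 = 0) :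
    Subgroup (PGL2 ℚ_[p] × PGL2 ℚ_[l]) :=
  Subgroup.closure (psi p l cp dp cl dl hp hl '' Atilde p l)

/-- The subgroup `Γ_l = ⟨ψ(B̃)⟩`. -/
def GammaL (cp dp : ℚ_[p]) (cl dl : ℚ_[l])
    (hp : cp ^ 2 + dp ^ 2 + 1 = 0) (hl : cl ^ 2 + dl ^ 2 + 1 = 0) :
    Subgroup (PGL2 ℚ_[p] × PGL2 ℚ_[l]) :=
  Subgroup.closure (psi p l cp dp cl dl hp hl '' Btilde p l)

/-- `Γ₀` is a maximal abelian subgroup of `Γ`: it is an abelian subgroup contained in `Γ`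
which is maximal among abelian subgroups of `Γ` ordered by inclusion. -/
def IsMaxAbelian {G : Type*} [Group G] (Γ Γ₀ : Subgroup G) : Prop :=
  Γ₀ ≤ Γ ∧ (∀ a ∈ Γ₀, ∀ b ∈ Γ₀, a * b = b * a) ∧
    ∀ H : Subgroup G, H ≤ Γ → (∀ a ∈ H, ∀ b ∈ H, a * b = b * a) → Γ₀ ≤ H → H = Γ₀

/-! ### Auxiliary lemmas -/

section Aux

lemma Mcd_mul {K : Type*} [Field K] {c d : K} (hcd : c ^ 2 + d ^ 2 + 1 = 0)
    (x y : ℍ[ℤ]) : Mcd c d (x * y) = Mcd c d x * Mcd c d y := by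
  ext i j
  fin_cases i <;> fin_cases j
  · simp [Mcd, Matrix.mul_apply, Fin.sum_univ_two, Quaternion.re_mul, Quaternion.imI_mul,
      Quaternion.imJ_mul, Quaternion.imK_mul]
    linear_combination (-(x.imI:K)*(y.imI:K) - (x.imK:K)*(y.imK:K)) * hcd
  · simp [Mcd, Matrix.mul_apply, Fin.sum_univ_two, Quaternion.re_mul, Quaternion.imI_mul,
      Quaternion.imJ_mul, Quaternion.imK_mul]
    linear_combination ((x.imK:K)*(y.imI:K) - (x.imI:K)*(y.imK:K)) * hcd
  · simp [Mcd, Matrix.mul_apply, Fin.sum_univ_two, Quaternion.re_mul, Quaternion.imI_mul,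
      Quaternion.imJ_mul, Quaternion.imK_mul]
    linear_combination ((x.imI:K)*(y.imK:K) - (x.imK:K)*(y.imI:K)) * hcd
  · simp [Mcd, Matrix.mul_apply, Fin.sum_univ_two, Quaternion.re_mul, Quaternion.imI_mul,
      Quaternion.imJ_mul, Quaternion.imK_mul]
    linear_combination (-(x.imI:K)*(y.imI:K) - (x.imK:K)*(y.imK:K)) * hcd

lemma Mcd_sub {K : Type*} [Field K] (c d : K) (x y : ℍ[ℤ]) :
    Mcd c d (x - y) = Mcd c d x - Mcd c d y := by
  ext i j
  fin_cases i <;> fin_cases j <;>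
    · simp [Mcd, Quaternion.re_sub, Quaternion.imI_sub, Quaternion.imJ_sub, Quaternion.imK_sub]
      push_cast
      ring

lemma Mcd_add {K : Type*} [Field K] (c d : K) (x y : ℍ[ℤ]) :
    Mcd c d (x + y) = Mcd c d x + Mcd c d y := by
  ext i j
  fin_cases i <;> fin_cases j <;>
    · simp [Mcd, Quaternion.re_add, Quaternion.imI_add, Quaternion.imJ_add, Quaternion.imK_add]
      push_cast
      ring

lemma Mcd_coe {K : Type*} [Field K] (c d : K) (n : ℤ) :
    Mcd c d ((n : ℍ[ℤ])) = (n : K) • 1 := by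
  ext i j
  fin_cases i <;> fin_cases j <;>
    simp [Mcd, Matrix.one_apply, Quaternion.re_coe, Quaternion.imI_coe, Quaternion.imJ_coe,
      Quaternion.imK_coe]

lemma Mcd_eq_zero {K : Type*} [Field K] [CharZero K] {c d : K}
    (hcd : c ^ 2 + d ^ 2 + 1 = 0) {x : ℍ[ℤ]} (h : Mcd c d x = 0) : x = 0 := by
  have h00 := congrFun (congrFun h 0) 0
  have h01 := congrFun (congrFun h 0) 1
  have h10 := congrFun (congrFun h 1) 0
  have h11 := congrFun (congrFun h 1) 1
  simp [Mcd] at h00 h01 h10 h11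
  have hre : (x.re : K) = 0 := by
    have : (2 : K) * (x.re : K) = 0 := by linear_combination h00 + h11
    simpa [two_ne_zero] using mul_eq_zero.mp this
  have himJ : (x.imJ : K) = 0 := by
    have : (2 : K) * (x.imJ : K) = 0 := by linear_combination h01 - h10
    simpa [two_ne_zero] using mul_eq_zero.mp this
  have hik : x.imI = 0 ∧ x.imK = 0 := by
    by_contra hc
    have hs : x.imI ^ 2 + x.imK ^ 2 ≠ 0 := by
      intro h0
      exact hc ⟨by nlinarith [sq_nonneg x.imI, sq_nonneg x.imK],
        by nlinarith [sq_nonneg x.imI, sq_nonneg x.imK]⟩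
    have hsK : ((x.imI ^ 2 + x.imK ^ 2 : ℤ) : K) ≠ 0 := by exact_mod_cast hs
    have hcz : c = 0 := by
      have : ((x.imI ^ 2 + x.imK ^ 2 : ℤ) : K) * c = 0 := by
        push_cast
        linear_combination (x.imI : K) * h00 + (x.imK : K) * h01
          - (x.imI : K) * hre - (x.imK : K) * himJ
      exact (mul_eq_zero.mp this).resolve_left hsK
    have hdz : d = 0 := by
      have : ((x.imI ^ 2 + x.imK ^ 2 : ℤ) : K) * d = 0 := by
        push_cast
        linear_combination (x.imK : K) * h00 - (x.imI : K) * h01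
          - (x.imK : K) * hre + (x.imI : K) * himJ
      exact (mul_eq_zero.mp this).resolve_left hsK
    rw [hcz, hdz] at hcd
    norm_num at hcd
  have h1 : x.re = 0 := by exact_mod_cast hre
  have h2 : x.imJ = 0 := by exact_mod_cast himJ
  ext <;> simp [h1, h2, hik.1, hik.2]

lemma mem_center_GL2_iff {K : Type*} [Field K] (U : GL (Fin 2) K) :
    U ∈ Subgroup.center (GL (Fin 2) K) ↔ ∃ r : K, (U : Matrix (Fin 2) (Fin 2) K) = r • 1 := by
  constructor
  · intro h
    have h2 : (U : Matrix (Fin 2) (Fin 2) K) ∈ Set.range (Matrix.scalar (Fin 2)) := by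
      apply Matrix.mem_range_scalar_of_commute_transvectionStruct
      intro t
      have hdet : (t.toMatrix).det ≠ 0 := by rw [t.det]; exact one_ne_zero
      have := Subgroup.mem_center_iff.mp h (Matrix.GeneralLinearGroup.mkOfDetNeZero t.toMatrix hdet)
      exact congrArg Units.val this
    obtain ⟨r, hr⟩ := h2
    exact ⟨r, by rw [← hr, Matrix.scalar_apply, Matrix.smul_one_eq_diagonal]⟩
  · rintro ⟨r, hr⟩
    apply Subgroup.mem_center_iff.mpr
    intro g
    refine Units.ext ?_
    rw [Units.val_mul, Units.val_mul, hr, smul_mul_assoc, mul_smul_comm, one_mul, mul_one]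

lemma int_even_iff_zmod2 (n : ℤ) : Even n ↔ (n : ZMod 2) = 0 := by
  rw [ZMod.intCast_zmod_eq_zero_iff_dvd, even_iff_two_dvd]
  norm_num

lemma int_odd_iff_zmod2 (n : ℤ) : Odd n ↔ (n : ZMod 2) = 1 := by
  rw [Int.not_even_iff_odd.symm, int_even_iff_zmod2]
  have : ∀ a : ZMod 2, a ≠ 0 ↔ a = 1 := by decide
  exact this _

variable {p l} {hp2 : p ≠ 2} {hl2 : l ≠ 2}

lemma GammaTilde.normSq_odd (hp2 : p ≠ 2) (hl2 : l ≠ 2)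
    {x : ℍ[ℤ]} (hx : x ∈ GammaTilde p l) : Quaternion.normSq x % 2 = 1 := by
  obtain ⟨⟨r, s, hrs⟩, -, -⟩ := hx
  rw [hrs, ← Int.odd_iff]
  have hp : Odd (p : ℤ) := by
    exact_mod_cast (Fact.out : p.Prime).odd_of_ne_two hp2
  have hl : Odd (l : ℤ) := by
    exact_mod_cast (Fact.out : l.Prime).odd_of_ne_two hl2
  exact (hp.pow).mul (hl.pow)

lemma GammaTilde.normSq_mod4 (hp2 : p ≠ 2) (hl2 : l ≠ 2)
    {x : ℍ[ℤ]} (hx : x ∈ GammaTilde p l) :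
    Quaternion.normSq x % 4 = 1 ∨ Quaternion.normSq x % 4 = 3 := by
  have := GammaTilde.normSq_odd hp2 hl2 hx
  omega

lemma GammaTilde.ne_zero {x : ℍ[ℤ]} (hx : x ∈ GammaTilde p l) : x ≠ 0 := by
  obtain ⟨⟨r, s, hrs⟩, -, -⟩ := hx
  intro h
  rw [h] at hrs
  simp only [map_zero] at hrs
  have hp : (0:ℤ) < (p:ℤ) ^ r := pow_pos (by exact_mod_cast (Fact.out : p.Prime).pos) r
  have hl : (0:ℤ) < (l:ℤ) ^ s := pow_pos (by exact_mod_cast (Fact.out : l.Prime).pos) s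
  nlinarith

lemma GammaTilde.re_odd (hp2 : p ≠ 2) (hl2 : l ≠ 2)
    {x : ℍ[ℤ]} (hx : x ∈ GammaTilde p l) : Odd x.re := by
  rcases GammaTilde.normSq_mod4 hp2 hl2 hx with h | h
  · exact (hx.2.1 h).1
  · exact (hx.2.2 h).2.1

/-- mod 2 data for an element of `Γ̃`. -/
lemma GammaTilde.zmod2 (hp2 : p ≠ 2) (hl2 : l ≠ 2)
    {x : ℍ[ℤ]} (hx : x ∈ GammaTilde p l) :
    (x.re : ZMod 2) = 1 ∧ (x.imI : ZMod 2) = 0 ∧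
    ((Quaternion.normSq x % 4 = 1 ∧ (x.imJ : ZMod 2) = 0 ∧ (x.imK : ZMod 2) = 0) ∨
     (Quaternion.normSq x % 4 = 3 ∧ (x.imJ : ZMod 2) = 1 ∧ (x.imK : ZMod 2) = 1)) := by
  rcases GammaTilde.normSq_mod4 hp2 hl2 hx with h | h
  · obtain ⟨h1, h2, h3, h4⟩ := hx.2.1 h
    exact ⟨(int_odd_iff_zmod2 _).mp h1, (int_even_iff_zmod2 _).mp h2,
      Or.inl ⟨h, (int_even_iff_zmod2 _).mp h3, (int_even_iff_zmod2 _).mp h4⟩⟩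
  · obtain ⟨h1, h2, h3, h4⟩ := hx.2.2 h
    exact ⟨(int_odd_iff_zmod2 _).mp h2, (int_even_iff_zmod2 _).mp h1,
      Or.inr ⟨h, (int_odd_iff_zmod2 _).mp h3, (int_odd_iff_zmod2 _).mp h4⟩⟩

lemma GammaTilde.one_mem' : (1 : ℍ[ℤ]) ∈ GammaTilde p l := by
  refine ⟨⟨0, 0, by simp⟩, ?_, ?_⟩ <;> intro h <;> simp_all

lemma GammaTilde.star_mem {x : ℍ[ℤ]} (hx : x ∈ GammaTilde p l) :
    star x ∈ GammaTilde p l := by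
  obtain ⟨⟨r, s, hrs⟩, h1, h3⟩ := hx
  refine ⟨⟨r, s, by rwa [Quaternion.normSq_star]⟩, ?_, ?_⟩ <;>
    rw [Quaternion.normSq_star] <;> intro h <;>
    simp only [Quaternion.re_star, Quaternion.imI_star, Quaternion.imJ_star,
      Quaternion.imK_star, even_neg, odd_neg]
  · exact h1 h
  · exact h3 h

lemma GammaTilde.mul_mem' (hp2 : p ≠ 2) (hl2 : l ≠ 2)
    {x y : ℍ[ℤ]} (hx : x ∈ GammaTilde p l) (hy : y ∈ GammaTilde p l) :
    x * y ∈ GammaTilde p l := by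
  have hmul : Quaternion.normSq (x * y) = Quaternion.normSq x * Quaternion.normSq y :=
    map_mul Quaternion.normSq x y
  obtain ⟨ax0, ax1, hxc⟩ := GammaTilde.zmod2 hp2 hl2 hx
  obtain ⟨ay0, ay1, hyc⟩ := GammaTilde.zmod2 hp2 hl2 hy
  obtain ⟨⟨r, s, hrs⟩, -, -⟩ := hx
  obtain ⟨⟨r', s', hrs'⟩, -, -⟩ := hy
  refine ⟨⟨r + r', s + s', by rw [hmul, hrs, hrs']; ring⟩, ?_, ?_⟩ <;> intro h <;>
    rcases hxc with ⟨hx4, hxJ, hxK⟩ | ⟨hx4, hxJ, hxK⟩ <;>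
    rcases hyc with ⟨hy4, hyJ, hyK⟩ | ⟨hy4, hyJ, hyK⟩ <;>
  first
  | (rw [hmul, Int.mul_emod, hx4, hy4] at h; omega)
  | (refine ⟨?_, ?_, ?_, ?_⟩ <;>
     · simp only [int_odd_iff_zmod2, int_even_iff_zmod2, Quaternion.re_mul,
         Quaternion.imI_mul, Quaternion.imJ_mul, Quaternion.imK_mul, Int.cast_add,
         Int.cast_sub, Int.cast_mul, Int.cast_neg, ax0, ax1, ay0, ay1, hxJ, hxK, hyJ, hyK]
       decide)

/-- Elements of `Γ̃` never anticommute. -/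
lemma GammaTilde.no_anticommute (hp2 : p ≠ 2) (hl2 : l ≠ 2)
    {x a : ℍ[ℤ]} (hx : x ∈ GammaTilde p l) (ha : a ∈ GammaTilde p l) :
    ¬ (x * a + a * x = 0) := by
  intro h
  have e0 := congrArg QuaternionAlgebra.re h
  have e1 := congrArg QuaternionAlgebra.imI h
  have e2 := congrArg QuaternionAlgebra.imJ h
  have e3 := congrArg QuaternionAlgebra.imK h
  simp only [Quaternion.re_add, Quaternion.imI_add, Quaternion.imJ_add, Quaternion.imK_add,
    Quaternion.re_mul, Quaternion.imI_mul, Quaternion.imJ_mul, Quaternion.imK_mul,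
    Quaternion.re_zero, Quaternion.imI_zero, Quaternion.imJ_zero, Quaternion.imK_zero] at e0 e1 e2 e3
  have key : (2:ℤ) * (a.re * Quaternion.normSq x) = 0 := by
    rw [Quaternion.normSq_def']
    linear_combination x.re * e0 + x.imI * e1 + x.imJ * e2 + x.imK * e3
  have h2 : a.re * Quaternion.normSq x = 0 :=
    (mul_eq_zero.mp key).resolve_left two_ne_zero
  have hnx : Quaternion.normSq x ≠ 0 := Quaternion.normSq_ne_zero.mpr (GammaTilde.ne_zero hx)
  have hare : a.re = 0 := (mul_eq_zero.mp h2).resolve_right hnx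
  have := GammaTilde.re_odd hp2 hl2 ha
  rw [hare] at this
  simp [Int.odd_iff] at this

lemma cross_aux1 {a1 a2 a3 u1 u2 u3 v1 v2 v3 : ℤ} (ha1 : a1 ≠ 0)
    (hu1 : u2*a3 = u3*a2) (hu2 : u3*a1 = u1*a3) (hu3 : u1*a2 = u2*a1)
    (hv2 : v3*a1 = v1*a3) (hv3 : v1*a2 = v2*a1) :
    u2*v3 = u3*v2 ∧ u3*v1 = u1*v3 ∧ u1*v2 = u2*v1 := by
  refine ⟨mul_left_cancel₀ ha1 ?_, mul_left_cancel₀ ha1 ?_, mul_left_cancel₀ ha1 ?_⟩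
  · linear_combination u2*hv2 + u3*hv3 + v1*hu1
  · linear_combination v1*hu2 - u1*hv2
  · linear_combination v1*hu3 - u1*hv3

lemma cross_zero {a1 a2 a3 u1 u2 u3 v1 v2 v3 : ℤ} (ha : ¬(a1 = 0 ∧ a2 = 0 ∧ a3 = 0))
    (hu1 : u2*a3 = u3*a2) (hu2 : u3*a1 = u1*a3) (hu3 : u1*a2 = u2*a1)
    (hv1 : v2*a3 = v3*a2) (hv2 : v3*a1 = v1*a3) (hv3 : v1*a2 = v2*a1) :
    u2*v3 = u3*v2 ∧ u3*v1 = u1*v3 ∧ u1*v2 = u2*v1 := by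
  by_cases h1 : a1 = 0
  · by_cases h2 : a2 = 0
    · have h3 : a3 ≠ 0 := fun h3 => ha ⟨h1, h2, h3⟩
      obtain ⟨q1, q2, q3⟩ := cross_aux1 h3 hu3 hu1 hu2 hv1 hv2
      exact ⟨q2, q3, q1⟩
    · obtain ⟨q1, q2, q3⟩ := cross_aux1 h2 hu2 hu3 hu1 hv3 hv1
      exact ⟨q3, q1, q2⟩
  · exact cross_aux1 h1 hu1 hu2 hu3 hv2 hv3

/-- If `x` commutes with `a`, the cross product of imaginary parts vanishes. -/
lemma comm_cross {x a : ℍ[ℤ]} (h : x * a = a * x) :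
    x.imJ * a.imK = x.imK * a.imJ ∧ x.imK * a.imI = x.imI * a.imK ∧
      x.imI * a.imJ = x.imJ * a.imI := by
  have hI := congrArg QuaternionAlgebra.imI h
  have hJ := congrArg QuaternionAlgebra.imJ h
  have hK := congrArg QuaternionAlgebra.imK h
  simp only [Quaternion.imI_mul, Quaternion.imJ_mul, Quaternion.imK_mul] at hI hJ hK
  refine ⟨mul_left_cancel₀ (two_ne_zero (α := ℤ)) ?_,
    mul_left_cancel₀ (two_ne_zero (α := ℤ)) ?_,
    mul_left_cancel₀ (two_ne_zero (α := ℤ)) ?_⟩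
  · linear_combination hI
  · linear_combination hJ
  · linear_combination hK

/-- Commutative transitivity at the quaternion level. -/
lemma quat_comm_trans {x y a : ℍ[ℤ]}
    (ha : ¬(a.imI = 0 ∧ a.imJ = 0 ∧ a.imK = 0))
    (h1 : x * a = a * x) (h2 : y * a = a * y) : x * y = y * x := by
  obtain ⟨hu1, hu2, hu3⟩ := comm_cross h1
  obtain ⟨hv1, hv2, hv3⟩ := comm_cross h2
  obtain ⟨q1, q2, q3⟩ := cross_zero ha hu1 hu2 hu3 hv1 hv2 hv3
  ext
  · simp only [Quaternion.re_mul]; ring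
  · simp only [Quaternion.imI_mul]; linear_combination 2*q1
  · simp only [Quaternion.imJ_mul]; linear_combination 2*q2
  · simp only [Quaternion.imK_mul]; linear_combination 2*q3

end Aux

section Psi

variable {K : Type*} [Field K] [CharZero K] {c d : K}

lemma psiGL_val (hcd : c ^ 2 + d ^ 2 + 1 = 0) {x : ℍ[ℤ]} (hx : x ≠ 0) :
    (psiGL c d hcd x : Matrix (Fin 2) (Fin 2) K) = Mcd c d x := by
  rw [psiGL, dif_neg hx]
  rfl

lemma quat_mul_ne_zero {x y : ℍ[ℤ]} (hx : x ≠ 0) (hy : y ≠ 0) : x * y ≠ 0 := by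
  intro h
  have : Quaternion.normSq (x * y) = 0 := by rw [h, map_zero]
  rw [_root_.map_mul] at this
  rcases mul_eq_zero.mp this with h' | h'
  · exact hx (Quaternion.normSq_eq_zero.mp h')
  · exact hy (Quaternion.normSq_eq_zero.mp h')

lemma psiGL_mul (hcd : c ^ 2 + d ^ 2 + 1 = 0) {x y : ℍ[ℤ]} (hx : x ≠ 0) (hy : y ≠ 0) :
    psiGL c d hcd (x * y) = psiGL c d hcd x * psiGL c d hcd y := by
  refine Units.ext ?_
  rw [Units.val_mul, psiGL_val hcd (quat_mul_ne_zero hx hy), psiGL_val hcd hx,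
    psiGL_val hcd hy, Mcd_mul hcd]

end Psi

variable {p l}

section PsiGamma

variable {cp dp : ℚ_[p]} {cl dl : ℚ_[l]}
  {hcp : cp ^ 2 + dp ^ 2 + 1 = 0} {hcl : cl ^ 2 + dl ^ 2 + 1 = 0}

lemma psi_mul {x y : ℍ[ℤ]} (hx : x ≠ 0) (hy : y ≠ 0) :
    psi p l cp dp cl dl hcp hcl (x * y) =
      psi p l cp dp cl dl hcp hcl x * psi p l cp dp cl dl hcp hcl y := by
  unfold psi
  rw [psiGL_mul hcp hx hy, psiGL_mul hcl hx hy]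
  rfl

/-- `ψ` of a real (scalar) quaternion is the identity. -/
lemma psi_coe_eq_one (n : ℤ) (hn : n ≠ 0) :
    psi p l cp dp cl dl hcp hcl ((n : ℍ[ℤ])) = 1 := by
  have hne : ((n : ℍ[ℤ])) ≠ 0 := by
    intro h
    exact hn (by exact_mod_cast congrArg QuaternionAlgebra.re h)
  unfold psi
  refine Prod.ext ?_ ?_ <;>
    · show QuotientGroup.mk _ = 1
      rw [QuotientGroup.eq_one_iff, mem_center_GL2_iff]
      exact ⟨_, by rw [psiGL_val _ hne, Mcd_coe]⟩

lemma psi_star_mul_self {x : ℍ[ℤ]} (hx : x ≠ 0) :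
    psi p l cp dp cl dl hcp hcl (star x) * psi p l cp dp cl dl hcp hcl x = 1 := by
  have hsx : star x ≠ 0 := star_ne_zero.mpr hx
  have hn : Quaternion.normSq x ≠ 0 := Quaternion.normSq_ne_zero.mpr hx
  rw [← psi_mul hsx hx, Quaternion.star_mul_self]
  exact psi_coe_eq_one _ hn

/-- Every element of `Γ` is `ψ` of an element of `Γ̃`. -/
lemma Gamma_mem_exists (hp2 : p ≠ 2) (hl2 : l ≠ 2)
    {g : PGL2 ℚ_[p] × PGL2 ℚ_[l]} (hg : g ∈ Gamma p l cp dp cl dl hcp hcl) :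
    ∃ x ∈ GammaTilde p l, psi p l cp dp cl dl hcp hcl x = g := by
  induction hg using Subgroup.closure_induction with
  | mem x hx => obtain ⟨y, hy, hxy⟩ := hx; exact ⟨y, hy, hxy⟩
  | one =>
      refine ⟨1, GammaTilde.one_mem', ?_⟩
      have h1 := psi_coe_eq_one (p := p) (l := l) (cp := cp) (dp := dp) (cl := cl) (dl := dl)
        (hcp := hcp) (hcl := hcl) 1 one_ne_zero
      rwa [Int.cast_one] at h1
  | mul u v hu hv ihu ihv =>
      obtain ⟨x, hx, hxu⟩ := ihu
      obtain ⟨y, hy, hyv⟩ := ihv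
      exact ⟨x * y, GammaTilde.mul_mem' hp2 hl2 hx hy, by
        rw [psi_mul (GammaTilde.ne_zero hx) (GammaTilde.ne_zero hy), hxu, hyv]⟩
  | inv u hu ihu =>
      obtain ⟨x, hx, hxu⟩ := ihu
      refine ⟨star x, GammaTilde.star_mem hx, ?_⟩
      have := psi_star_mul_self (p := p) (l := l) (cp := cp) (dp := dp) (cl := cl) (dl := dl)
        (hcp := hcp) (hcl := hcl) (GammaTilde.ne_zero hx)
      rw [hxu] at this
      exact eq_inv_of_mul_eq_one_left this

/-- If the images of `x, a ∈ Γ̃` under `ψ` commute, then `x` and `a` commute. -/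
lemma comm_of_psi_comm (hp2 : p ≠ 2) (hl2 : l ≠ 2)
    {x a : ℍ[ℤ]} (hx : x ∈ GammaTilde p l) (ha : a ∈ GammaTilde p l)
    (h : psi p l cp dp cl dl hcp hcl x * psi p l cp dp cl dl hcp hcl a =
         psi p l cp dp cl dl hcp hcl a * psi p l cp dp cl dl hcp hcl x) :
    x * a = a * x := by
  have hx0 := GammaTilde.ne_zero hx
  have ha0 := GammaTilde.ne_zero ha
  have h1 : (QuotientGroup.mk (psiGL cp dp hcp x * psiGL cp dp hcp a) :
      PGL2 ℚ_[p]) = QuotientGroup.mk (psiGL cp dp hcp a * psiGL cp dp hcp x) :=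
    congrArg Prod.fst h
  rw [QuotientGroup.eq] at h1
  obtain ⟨r, hr⟩ := (mem_center_GL2_iff _).mp h1
  -- hr : ((psiGL x * psiGL a)⁻¹ * (psiGL a * psiGL x)).val = r • 1
  have hval : (psiGL cp dp hcp a * psiGL cp dp hcp x).val =
      (psiGL cp dp hcp x * psiGL cp dp hcp a).val * (r • 1) := by
    conv_lhs => rw [← mul_inv_cancel_left (psiGL cp dp hcp x * psiGL cp dp hcp a)
      (psiGL cp dp hcp a * psiGL cp dp hcp x)]
    rw [Units.val_mul, hr]
  rw [Units.val_mul, Units.val_mul, psiGL_val hcp hx0, psiGL_val hcp ha0] at hval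
  have hax : Mcd cp dp (a * x) = r • Mcd cp dp (x * a) := by
    rw [Mcd_mul hcp, Mcd_mul hcp, hval]
    rw [mul_smul_comm, mul_one]
  -- determinant gives r ^ 2 = 1
  have hdet : ((Quaternion.normSq (a * x) : ℤ) : ℚ_[p]) =
      r ^ 2 * ((Quaternion.normSq (x * a) : ℤ) : ℚ_[p]) := by
    rw [← det_Mcd hcp, ← det_Mcd hcp, hax, Matrix.det_smul]
    norm_num
  have hnsq : Quaternion.normSq (a * x) = Quaternion.normSq (x * a) := by
    rw [_root_.map_mul, _root_.map_mul, mul_comm]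
  have hnz : ((Quaternion.normSq (x * a) : ℤ) : ℚ_[p]) ≠ 0 := by
    exact_mod_cast Quaternion.normSq_ne_zero.mpr (quat_mul_ne_zero hx0 ha0)
  have hr2 : r ^ 2 = 1 := by
    rw [hnsq] at hdet
    have hz : ((Quaternion.normSq (x * a) : ℤ) : ℚ_[p]) * (r ^ 2 - 1) = 0 := by
      linear_combination -hdet
    exact sub_eq_zero.mp ((mul_eq_zero.mp hz).resolve_left hnz)
  have hr1 : r = 1 ∨ r = -1 := by
    have h0 : (r - 1) * (r + 1) = 0 := by linear_combination hr2
    rcases mul_eq_zero.mp h0 with h' | h'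
    · exact Or.inl (sub_eq_zero.mp h')
    · exact Or.inr (eq_neg_of_add_eq_zero_left h')
  rcases hr1 with rfl | rfl
  · have hz : Mcd cp dp (a * x - x * a) = 0 := by
      rw [Mcd_sub, hax, one_smul, sub_self]
    have := Mcd_eq_zero hcp hz
    exact (sub_eq_zero.mp this).symm
  · exfalso
    have : Mcd cp dp (x * a + a * x) = 0 := by
      rw [Mcd_add, hax, neg_smul, one_smul, add_neg_cancel]
    have h0 := Mcd_eq_zero hcp this
    exact GammaTilde.no_anticommute hp2 hl2 hx ha h0

end PsiGamma

/-- Lemma 3: two distinct maximal abelian subgroups of `Γ` intersect trivially. -/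
theorem maxAbelian_inter_trivial (p l : ℕ) [Fact p.Prime] [Fact l.Prime]
    (hp2 : p ≠ 2) (hl2 : l ≠ 2) (hpl : p ≠ l)
    (cp dp : ℚ_[p]) (cl dl : ℚ_[l])
    (hcp : cp ^ 2 + dp ^ 2 + 1 = 0) (hcl : cl ^ 2 + dl ^ 2 + 1 = 0)
    (Γ₁ Γ₂ : Subgroup (PGL2 ℚ_[p] × PGL2 ℚ_[l]))
    (h₁ : IsMaxAbelian (Gamma p l cp dp cl dl hcp hcl) Γ₁)
    (h₂ : IsMaxAbelian (Gamma p l cp dp cl dl hcp hcl) Γ₂)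
    (hne : Γ₁ ≠ Γ₂) :
    Γ₁ ⊓ Γ₂ = ⊥ := by
  by_contra hbot
  obtain ⟨g, hg, hg1⟩ : ∃ g ∈ Γ₁ ⊓ Γ₂, g ≠ 1 := by
    by_contra hc
    push_neg at hc
    exact hbot ((Subgroup.eq_bot_iff_forall _).mpr hc)
  have hgΓ : g ∈ Gamma p l cp dp cl dl hcp hcl := h₁.1 (Subgroup.mem_inf.mp hg).1
  obtain ⟨a, haT, haψ⟩ := Gamma_mem_exists hp2 hl2 hgΓ
  have haim : ¬(a.imI = 0 ∧ a.imJ = 0 ∧ a.imK = 0) := by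
    rintro ⟨hI, hJ, hK⟩
    apply hg1
    rw [← haψ]
    have hare : a = ((a.re : ℤ) : ℍ[ℤ]) := by ext <;> simp [hI, hJ, hK]
    have hre0 : a.re ≠ 0 := by
      intro h0
      exact GammaTilde.ne_zero haT (by rw [hare, h0]; simp)
    rw [hare]
    exact psi_coe_eq_one _ hre0
  set H : Subgroup (PGL2 ℚ_[p] × PGL2 ℚ_[l]) :=
    Subgroup.centralizer {g} ⊓ Gamma p l cp dp cl dl hcp hcl with hH
  have hHab : ∀ u ∈ H, ∀ v ∈ H, u * v = v * u := by
    intro u hu v hv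
    obtain ⟨x, hxT, hxψ⟩ := Gamma_mem_exists hp2 hl2 (Subgroup.mem_inf.mp hu).2
    obtain ⟨y, hyT, hyψ⟩ := Gamma_mem_exists hp2 hl2 (Subgroup.mem_inf.mp hv).2
    have hxc : x * a = a * x := by
      apply comm_of_psi_comm hp2 hl2 hxT haT
      rw [hxψ, haψ]
      exact (Subgroup.mem_centralizer_iff.mp (Subgroup.mem_inf.mp hu).1 g rfl).symm
    have hyc : y * a = a * y := by
      apply comm_of_psi_comm hp2 hl2 hyT haT
      rw [hyψ, haψ]
      exact (Subgroup.mem_centralizer_iff.mp (Subgroup.mem_inf.mp hv).1 g rfl).symm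
    have hxy : x * y = y * x := quat_comm_trans haim hxc hyc
    rw [← hxψ, ← hyψ, ← psi_mul (GammaTilde.ne_zero hxT) (GammaTilde.ne_zero hyT), hxy,
      psi_mul (GammaTilde.ne_zero hyT) (GammaTilde.ne_zero hxT)]
  have hle : ∀ (Γ' : Subgroup (PGL2 ℚ_[p] × PGL2 ℚ_[l])),
      IsMaxAbelian (Gamma p l cp dp cl dl hcp hcl) Γ' → g ∈ Γ' → H = Γ' := by
    intro Γ' hΓ' hgΓ'
    refine hΓ'.2.2 H inf_le_right hHab ?_
    intro u hu
    refine Subgroup.mem_inf.mpr ⟨?_, hΓ'.1 hu⟩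
    refine Subgroup.mem_centralizer_iff.mpr ?_
    intro h' hh'
    rw [Set.mem_singleton_iff.mp hh']
    exact hΓ'.2.1 g hgΓ' u hu
  have e1 := hle Γ₁ h₁ (Subgroup.mem_inf.mp hg).1
  have e2 := hle Γ₂ h₂ (Subgroup.mem_inf.mp hg).2
  exact hne (e1 ▸ e2)
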